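/- Let 0 < τ ≤ 1 and let (S, I, P) be a nonnegative classical solution of the τ-parametrized elliptic system (4.8) on Ω, i.e., S, I, P are twice continuously differentiable in Ω, continuous on Ω̄, nonnegative in Ω, vanish on ∂Ω, and satisfy −dΔS = τ[a(S+I) − bS − c(S+I)S − kSI − ℓSP], −dΔI = τ[kSI − bI − c(S+I)I − ℓIP], −DΔP = τ[θ(S+I)P − ρP] in Ω. Then sup_{Ω̄} (S + I) ≤ (a−b)/c and sup_{Ω̄} P ≤ dθ(a−b)/(cDℓ) + θ(a−b)²/(4cℓρ). -/

import Mathlib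

open Set

noncomputable def vlap {N : ℕ} (f : EuclideanSpace ℝ (Fin N) → ℝ)
    (x : EuclideanSpace ℝ (Fin N)) : ℝ :=
  ∑ i : Fin N, fderiv ℝ (fun y => fderiv ℝ f y (EuclideanSpace.single i 1)) x
    (EuclideanSpace.single i 1)

/-- `f` is twice continuously differentiable in `Ω`, continuous on `closure Ω`,
strictly positive in `Ω` and vanishes on the boundary `frontier Ω`. -/
def PosDirichlet {N : ℕ} (Ω : Set (EuclideanSpace ℝ (Fin N)))
    (f : EuclideanSpace ℝ (Fin N) → ℝ) : Prop :=
  ContDiffOn ℝ 2 f Ω ∧ ContinuousOn f (closure Ω) ∧ (∀ x ∈ Ω, 0 < f x) ∧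
    ∀ x ∈ frontier Ω, f x = 0
open Filter


/-- 1D second derivative test at a local max. -/
lemma secondDeriv_nonpos_of_isLocalMax {g h : ℝ → ℝ} {L : ℝ} {ε : ℝ} (hε : 0 < ε)
    (hg : ∀ t ∈ Ioo (-ε) ε, HasDerivAt g (h t) t)
    (hh : HasDerivAt h L 0) (hmax : IsLocalMax g 0) : L ≤ 0 := by
  by_contra hL
  push_neg at hL
  have h0 : h 0 = 0 := by
    have := hmax.deriv_eq_zero
    have hg0 := hg 0 ⟨by linarith, hε⟩
    rw [hg0.deriv] at this
    exact this
  -- slope tends to L > 0, so h t > 0 for small t > 0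
  have hslope : Tendsto (fun t => h t / t) (nhdsWithin 0 {0}ᶜ) (nhds L) := by
    have h1 := hasDerivAt_iff_tendsto_slope.1 hh
    have : slope h 0 = fun t => h t / t := by
      funext t; rw [slope_def_field]; rw [h0]; ring_nf
    rwa [this] at h1
  have hev : ∀ᶠ t in nhdsWithin 0 {0}ᶜ, 0 < h t / t :=
    hslope.eventually (eventually_gt_nhds hL)
  rw [eventually_nhdsWithin_iff, Metric.eventually_nhds_iff] at hev
  obtain ⟨δ, hδ0, hδ⟩ := hev
  -- within the local max neighborhood
  obtain ⟨δ', hδ'0, hδ'⟩ := Metric.eventually_nhds_iff.1 hmax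
  set r := min (min δ δ') ε with hr
  have hr0 : 0 < r := lt_min (lt_min hδ0 hδ'0) hε
  have hrε : r ≤ ε := min_le_right _ _
  have hrδ : r ≤ δ := (min_le_left _ _).trans (min_le_left _ _)
  have hrδ' : r ≤ δ' := (min_le_left _ _).trans (min_le_right _ _)
  have hpos : ∀ t ∈ Ioo (0:ℝ) r, 0 < h t := by
    intro t ht
    have hts : dist t 0 < δ := by
      rw [Real.dist_eq, sub_zero, abs_of_pos ht.1]
      exact ht.2.trans_le hrδ
    have := hδ hts (by simp [ne_of_gt ht.1])
    have := mul_pos this ht.1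
    rwa [div_mul_cancel₀ _ (ne_of_gt ht.1)] at this
  -- g strictly increasing on [0, r/2]
  have hmono : StrictMonoOn g (Icc 0 (r/2)) := by
    apply strictMonoOn_of_deriv_pos (convex_Icc _ _)
    · intro t ht
      exact ((hg t ⟨by linarith [ht.1], by linarith [ht.2, hr0]⟩).continuousAt).continuousWithinAt
    · intro t ht
      rw [interior_Icc] at ht
      rw [(hg t ⟨by linarith [ht.1], by linarith [ht.2, hr0]⟩).deriv]
      exact hpos t ⟨ht.1, by linarith [ht.2]⟩
  have hlt : g 0 < g (r/2) := hmono ⟨le_refl 0, by linarith⟩ ⟨by linarith, le_refl _⟩ (by linarith)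
  have : g (r/2) ≤ g 0 := by
    apply hδ'
    rw [Real.dist_eq, sub_zero, abs_of_pos (by linarith)]
    linarith
  linarith
open Set Filter

section
variable {N : ℕ} {Ω : Set (EuclideanSpace ℝ (Fin N))} {f : EuclideanSpace ℝ (Fin N) → ℝ}

lemma diffAt_of_c2 (hΩ : IsOpen Ω) (hf : ContDiffOn ℝ 2 f Ω) {y : EuclideanSpace ℝ (Fin N)}
    (hy : y ∈ Ω) : DifferentiableAt ℝ f y :=
  (hf.differentiableOn (by norm_num) y hy).differentiableAt (hΩ.mem_nhds hy)

lemma fderiv_diffAt_of_c2 (hΩ : IsOpen Ω) (hf : ContDiffOn ℝ 2 f Ω)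
    {x : EuclideanSpace ℝ (Fin N)} (hx : x ∈ Ω) :
    DifferentiableAt ℝ (fderiv ℝ f) x := by
  have h1 : ContDiffOn ℝ 1 (fderiv ℝ f) Ω := hf.fderiv_of_isOpen hΩ (by norm_num)
  exact (h1.differentiableOn (by norm_num) x hx).differentiableAt (hΩ.mem_nhds hx)

lemma dirderiv_diffAt_of_c2 (hΩ : IsOpen Ω) (hf : ContDiffOn ℝ 2 f Ω)
    {x : EuclideanSpace ℝ (Fin N)} (hx : x ∈ Ω) (v : EuclideanSpace ℝ (Fin N)) :
    DifferentiableAt ℝ (fun y => fderiv ℝ f y v) x :=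
  (fderiv_diffAt_of_c2 hΩ hf hx).clm_apply (differentiableAt_const v)

/-- directional second derivative at an interior max over Ω is ≤ 0 -/
lemma dir2_nonpos (hΩ : IsOpen Ω) (hf : ContDiffOn ℝ 2 f Ω)
    {x : EuclideanSpace ℝ (Fin N)} (hx : x ∈ Ω)
    (hmax : ∀ y ∈ Ω, f y ≤ f x) (v : EuclideanSpace ℝ (Fin N)) :
    fderiv ℝ (fun y => fderiv ℝ f y v) x v ≤ 0 := by
  set L : ℝ → EuclideanSpace ℝ (Fin N) := fun t => x + t • v with hLdef
  have hLc : Continuous L := by continuity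
  have hL0 : L 0 = x := by simp [hLdef]
  have hLd : ∀ t : ℝ, HasDerivAt L v t := by
    intro t
    have h := ((hasDerivAt_id t).smul_const v).const_add x
    rw [one_smul] at h
    exact h
  -- find ε with L t ∈ Ω for |t| < ε
  have hpre : IsOpen (L ⁻¹' Ω) := hΩ.preimage hLc
  have h0mem : (0:ℝ) ∈ L ⁻¹' Ω := by simp [hL0, hx]
  obtain ⟨ε, hε0, hεsub⟩ := Metric.isOpen_iff.1 hpre 0 h0mem
  have hmemΩ : ∀ t ∈ Ioo (-ε) ε, L t ∈ Ω := by
    intro t ht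
    apply hεsub
    rw [Metric.mem_ball, Real.dist_eq, sub_zero, abs_lt]
    exact ⟨ht.1, ht.2⟩
  set g : ℝ → ℝ := fun t => f (L t) with hgdef
  set h : ℝ → ℝ := fun t => fderiv ℝ f (L t) v with hhdef
  have hg : ∀ t ∈ Ioo (-ε) ε, HasDerivAt g (h t) t := by
    intro t ht
    exact ((diffAt_of_c2 hΩ hf (hmemΩ t ht)).hasFDerivAt).comp_hasDerivAt t (hLd t)
  have hh : HasDerivAt h (fderiv ℝ (fun y => fderiv ℝ f y v) x v) 0 := by
    have hdF := (dirderiv_diffAt_of_c2 hΩ hf hx v).hasFDerivAt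
    rw [← hL0] at hdF
    have := hdF.comp_hasDerivAt 0 (hLd 0)
    rw [hL0] at this
    exact this
  have hmaxg : IsLocalMax g 0 := by
    have : ∀ᶠ t in nhds (0:ℝ), L t ∈ Ω := by
      have := hpre.mem_nhds h0mem
      exact this
    filter_upwards [this] with t ht
    simpa [hgdef, hL0] using hmax (L t) ht
  exact secondDeriv_nonpos_of_isLocalMax hε0 hg hh hmaxg

lemma vlap_nonpos (hΩ : IsOpen Ω) (hf : ContDiffOn ℝ 2 f Ω)
    {x : EuclideanSpace ℝ (Fin N)} (hx : x ∈ Ω)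
    (hmax : ∀ y ∈ Ω, f y ≤ f x) : vlap f x ≤ 0 :=
  Finset.sum_nonpos fun i _ => dir2_nonpos hΩ hf hx hmax _

end
section
variable {N : ℕ} {Ω : Set (EuclideanSpace ℝ (Fin N))} {f g : EuclideanSpace ℝ (Fin N) → ℝ}

lemma vlap_add (hΩ : IsOpen Ω) (hf : ContDiffOn ℝ 2 f Ω) (hg : ContDiffOn ℝ 2 g Ω)
    {x : EuclideanSpace ℝ (Fin N)} (hx : x ∈ Ω) :
    vlap (fun y => f y + g y) x = vlap f x + vlap g x := by
  unfold vlap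
  rw [← Finset.sum_add_distrib]
  apply Finset.sum_congr rfl
  intro i _
  set v := EuclideanSpace.single i (1:ℝ)
  have hinner : (fun y => fderiv ℝ (fun z => f z + g z) y v)
      =ᶠ[nhds x] (fun y => fderiv ℝ f y v + fderiv ℝ g y v) := by
    filter_upwards [hΩ.mem_nhds hx] with y hy
    rw [fderiv_fun_add (diffAt_of_c2 hΩ hf hy) (diffAt_of_c2 hΩ hg hy)]
    simp
  rw [hinner.fderiv_eq]
  rw [fderiv_fun_add (dirderiv_diffAt_of_c2 hΩ hf hx v) (dirderiv_diffAt_of_c2 hΩ hg hx v)]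
  simp

lemma vlap_const_mul (hΩ : IsOpen Ω) (hf : ContDiffOn ℝ 2 f Ω) (p : ℝ)
    {x : EuclideanSpace ℝ (Fin N)} (hx : x ∈ Ω) :
    vlap (fun y => p * f y) x = p * vlap f x := by
  unfold vlap
  rw [Finset.mul_sum]
  apply Finset.sum_congr rfl
  intro i _
  set v := EuclideanSpace.single i (1:ℝ)
  have hinner : (fun y => fderiv ℝ (fun z => p * f z) y v)
      =ᶠ[nhds x] (fun y => p * fderiv ℝ f y v) := by
    filter_upwards [hΩ.mem_nhds hx] with y hy
    rw [fderiv_const_mul (diffAt_of_c2 hΩ hf hy) p]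
    simp
  rw [hinner.fderiv_eq]
  rw [fderiv_const_mul (dirderiv_diffAt_of_c2 hΩ hf hx v) p]
  simp

end

section
variable {N : ℕ} {Ω : Set (EuclideanSpace ℝ (Fin N))} {w : EuclideanSpace ℝ (Fin N) → ℝ}

lemma max_principle (hΩopen : IsOpen Ω) (hne : Ω.Nonempty)
    (hΩbd : Bornology.IsBounded Ω)
    (hreg : ContDiffOn ℝ 2 w Ω) (hcont : ContinuousOn w (closure Ω))
    (hbd : ∀ x ∈ frontier Ω, w x ≤ 0) {M : ℝ} (hM : 0 ≤ M)
    (hstep : ∀ x ∈ Ω, (∀ y ∈ Ω, w y ≤ w x) → vlap w x ≤ 0 → w x ≤ M) :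
    ∀ x ∈ closure Ω, w x ≤ M := by
  have hcomp : IsCompact (closure Ω) := hΩbd.isCompact_closure
  obtain ⟨x0, hx0, hmax⟩ := hcomp.exists_isMaxOn (hne.mono subset_closure) hcont
  have hb : w x0 ≤ M := by
    rcases (closure_eq_self_union_frontier Ω ▸ hx0 : x0 ∈ Ω ∪ frontier Ω) with h | h
    · exact hstep x0 h (fun y hy => hmax (subset_closure hy))
        (vlap_nonpos hΩopen hreg h (fun y hy => hmax (subset_closure hy)))
    · exact (hbd x0 h).trans hM
  exact fun x hx => (hmax hx).trans hb

end
set_option maxHeartbeats 1000000 in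
/-- A priori bounds for nonnegative classical solutions of the τ-parametrized elliptic
system (4.8): S + I ≤ (a-b)/c and P ≤ dθ(a-b)/(cDℓ) + θ(a-b)²/(4cℓρ) on Ω̄. -/
theorem stmt17 {N : ℕ} (hN : 1 ≤ N) (Ω : Set (EuclideanSpace ℝ (Fin N)))
    (hΩopen : IsOpen Ω) (hΩconn : IsConnected Ω) (hΩbd : Bornology.IsBounded Ω)
    (a b c k el th rh d D : ℝ) (ha : 0 < a) (hb : 0 < b) (hc : 0 < c) (hk : 0 < k)
    (hel : 0 < el) (hth : 0 < th) (hrh : 0 < rh) (hd : 0 < d) (hD : 0 < D) (hab : b < a)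
    (tau : ℝ) (htau0 : 0 < tau) (htau1 : tau ≤ 1)
    (S I P : EuclideanSpace ℝ (Fin N) → ℝ)
    (hSreg : ContDiffOn ℝ 2 S Ω) (hScont : ContinuousOn S (closure Ω))
    (hSpos : ∀ x ∈ Ω, 0 ≤ S x) (hSbd : ∀ x ∈ frontier Ω, S x = 0)
    (hIreg : ContDiffOn ℝ 2 I Ω) (hIcont : ContinuousOn I (closure Ω))
    (hIpos : ∀ x ∈ Ω, 0 ≤ I x) (hIbd : ∀ x ∈ frontier Ω, I x = 0)
    (hPreg : ContDiffOn ℝ 2 P Ω) (hPcont : ContinuousOn P (closure Ω))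
    (hPpos : ∀ x ∈ Ω, 0 ≤ P x) (hPbd : ∀ x ∈ frontier Ω, P x = 0)
    (heqS : ∀ x ∈ Ω, -d * vlap S x
      = tau * (a * (S x + I x) - b * S x - c * (S x + I x) * S x - k * S x * I x
          - el * S x * P x))
    (heqI : ∀ x ∈ Ω, -d * vlap I x
      = tau * (k * S x * I x - b * I x - c * (S x + I x) * I x - el * I x * P x))
    (heqP : ∀ x ∈ Ω, -D * vlap P x = tau * (th * (S x + I x) * P x - rh * P x)) :
    (∀ x ∈ closure Ω, S x + I x ≤ (a - b) / c) ∧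
    (∀ x ∈ closure Ω, P x ≤ d * th * (a - b) / (c * D * el)
      + th * (a - b) ^ 2 / (4 * c * el * rh)) := by
  have hne : Ω.Nonempty := hΩconn.nonempty
  have hab' : (0:ℝ) ≤ a - b := by linarith
  set u : EuclideanSpace ℝ (Fin N) → ℝ := fun x => S x + I x with hu
  have hureg : ContDiffOn ℝ 2 u Ω := hSreg.add hIreg
  have hucont : ContinuousOn u (closure Ω) := hScont.add hIcont
  have hM1 : (0:ℝ) ≤ (a - b) / c := div_nonneg hab' hc.le
  -- Part 1
  have part1 : ∀ x ∈ closure Ω, u x ≤ (a - b) / c := by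
    apply max_principle hΩopen hne hΩbd hureg hucont
      (fun x hx => by simp [hu, hSbd x hx, hIbd x hx]) hM1
    intro x hx hmax hvl
    have e1 := heqS x hx
    have e2 := heqI x hx
    have hvu : vlap u x = vlap S x + vlap I x := vlap_add hΩopen hSreg hIreg hx
    have hkey : 0 ≤ tau * ((a - b) * u x - c * (u x)^2 - el * (u x) * P x) := by
      have h0 : 0 ≤ -d * vlap u x := by nlinarith [mul_nonneg hd.le (neg_nonneg.mpr hvl)]
      have heq : -d * vlap u x
          = tau * ((a - b) * u x - c * (u x)^2 - el * (u x) * P x) := by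
        rw [hvu]
        simp only [hu]
        linear_combination e1 + e2
      rw [heq] at h0
      exact h0
    have hX : 0 ≤ (a - b) * u x - c * (u x)^2 - el * (u x) * P x :=
      (mul_nonneg_iff_of_pos_left htau0).mp hkey
    have hu0 : 0 ≤ u x := add_nonneg (hSpos x hx) (hIpos x hx)
    rw [le_div_iff₀ hc]
    rcases eq_or_lt_of_le hu0 with h | h
    · nlinarith
    · nlinarith [mul_nonneg (mul_nonneg hel.le hu0) (hPpos x hx)]
  refine ⟨part1, ?_⟩
  -- Part 2
  have hupc : ∀ x ∈ closure Ω, 0 ≤ u x := by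
    intro x hx
    rcases (closure_eq_self_union_frontier Ω ▸ hx : x ∈ Ω ∪ frontier Ω) with h | h
    · exact add_nonneg (hSpos x h) (hIpos x h)
    · simp [hu, hSbd x h, hIbd x h]
  set p : ℝ := d * th / (D * el) with hp
  have hppos : 0 < p := by positivity
  set φ : EuclideanSpace ℝ (Fin N) → ℝ := fun x => p * u x + P x with hφ
  set M2 : ℝ := d * th * (a - b) / (c * D * el) + th * (a - b) ^ 2 / (4 * c * el * rh)
    with hM2
  have hM2pos : 0 ≤ M2 := by
    apply add_nonneg
    · exact div_nonneg (mul_nonneg (mul_nonneg hd.le hth.le) hab') (by positivity)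
    · exact div_nonneg (mul_nonneg hth.le (sq_nonneg _)) (by positivity)
  have hφreg : ContDiffOn ℝ 2 φ Ω := (contDiffOn_const.mul hureg).add hPreg
  have hφcont : ContinuousOn φ (closure Ω) := (continuousOn_const.mul hucont).add hPcont
  have hmain : ∀ x ∈ closure Ω, φ x ≤ M2 := by
    apply max_principle hΩopen hne hΩbd hφreg hφcont
      (fun x hx => by simp [hφ, hu, hSbd x hx, hIbd x hx, hPbd x hx]) hM2pos
    intro x hx hmax hvl
    have e1 := heqS x hx
    have e2 := heqI x hx
    have e3 := heqP x hx
    have hvu : vlap u x = vlap S x + vlap I x := vlap_add hΩopen hSreg hIreg hx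
    have hvφ : vlap φ x = p * vlap u x + vlap P x := by
      have h1 : vlap φ x = vlap (fun y => p * u y) x + vlap P x :=
        vlap_add hΩopen (contDiffOn_const.mul hureg) hPreg hx
      rw [h1, vlap_const_mul hΩopen hureg p hx]
    have hpe : D * el * p = d * th := by
      rw [hp]; field_simp
    have heq : -(D * el) * vlap φ x
        = tau * (th * ((a - b) * u x - c * (u x)^2) - el * rh * P x) := by
      rw [hvφ, hvu]
      simp only [hu]
      linear_combination th * e1 + th * e2 + el * e3
        - (vlap S x + vlap I x) * hpe
    have h0 : 0 ≤ -(D * el) * vlap φ x := by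
      nlinarith [mul_nonneg (mul_pos hD hel).le (neg_nonneg.mpr hvl)]
    rw [heq] at h0
    have hX : 0 ≤ th * ((a - b) * u x - c * (u x)^2) - el * rh * P x :=
      (mul_nonneg_iff_of_pos_left htau0).mp h0
    have hu0 : 0 ≤ u x := add_nonneg (hSpos x hx) (hIpos x hx)
    have hub : u x ≤ (a - b) / c := part1 x (subset_closure hx)
    have hPb : P x ≤ th * (a - b) ^ 2 / (4 * c * el * rh) := by
      rw [le_div_iff₀ (by positivity)]
      have hq : 4 * c * (el * rh * P x) ≤ 4 * c * (th * ((a - b) * u x - c * (u x)^2)) :=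
        mul_le_mul_of_nonneg_left (by linarith) (by positivity)
      have h2 : 4 * c * (th * ((a - b) * u x - c * (u x)^2)) ≤ th * (a - b)^2 := by
        nlinarith [mul_nonneg hth.le (sq_nonneg (a - b - 2 * c * u x))]
      linarith
    have hpu : p * u x ≤ d * th * (a - b) / (c * D * el) := by
      have h1 : p * u x ≤ p * ((a - b) / c) := mul_le_mul_of_nonneg_left hub hppos.le
      have h2 : p * ((a - b) / c) = d * th * (a - b) / (c * D * el) := by
        rw [hp]; ring
      linarith
    simp only [hφ, hM2]
    linarith
  intro x hx
  have : P x ≤ φ x := by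
    simp only [hφ]
    nlinarith [mul_nonneg hppos.le (hupc x hx)]
  linarith [hmain x hx]
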